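/- There is a constant C > 0 such that the following holds. For every n ∈ ℕ and every D ∈ ℕ, every f ∈ [1/3, 1]^n with ‖f‖₁ ≤ n − D, and x¹, x² sampled independently from f, one has Pr[ |‖x¹‖₁ − ‖x²‖₁| ≥ (1/5)·√D ] ≥ C. -/

import Mathlib

open Finset

noncomputable def sampleProb {n : ℕ} (f : Fin n → ℝ) (x : Fin n → Bool) : ℝ :=
  ∏ i, if x i then f i else 1 - f i

noncomputable def prPair {n : ℕ} (f : Fin n → ℝ)
    (E : Set ((Fin n → Bool) × (Fin n → Bool))) : ℝ :=
  ∑ p : (Fin n → Bool) × (Fin n → Bool),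
    Set.indicator E (fun p => sampleProb f p.1 * sampleProb f p.2) p

def numOnes {n : ℕ} (x : Fin n → Bool) : ℕ :=
  (Finset.univ.filter (fun i => x i = true)).card

namespace TSD

noncomputable section

def b2r (b : Bool) : ℝ := if b then 1 else 0

def db (c : Bool × Bool) : ℝ := b2r c.1 - b2r c.2

def w {n : ℕ} (f : Fin n → ℝ) (i : Fin n) (c : Bool × Bool) : ℝ :=
  (if c.1 then f i else 1 - f i) * (if c.2 then f i else 1 - f i)

def dd {n : ℕ} (i : Fin n) (p : (Fin n → Bool) × (Fin n → Bool)) : ℝ :=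
  db (p.1 i, p.2 i)

def Ex {n : ℕ} (f : Fin n → ℝ) (g : (Fin n → Bool) × (Fin n → Bool) → ℝ) : ℝ :=
  ∑ p : (Fin n → Bool) × (Fin n → Bool), (sampleProb f p.1 * sampleProb f p.2) * g p

def M {n : ℕ} (f : Fin n → ℝ) (i : Fin n) (e : ℕ) : ℝ :=
  if e = 0 then 1 else if Even e then 2 * f i * (1 - f i) else 0

variable {n : ℕ} (f : Fin n → ℝ)

lemma mu_prod (p : (Fin n → Bool) × (Fin n → Bool)) :
    sampleProb f p.1 * sampleProb f p.2 = ∏ i, w f i (p.1 i, p.2 i) := by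
  rw [sampleProb, sampleProb, ← Finset.prod_mul_distrib]
  rfl

lemma factor (h : Fin n → Bool × Bool → ℝ) :
    Ex f (fun p => ∏ i, h i (p.1 i, p.2 i)) = ∏ i, ∑ c : Bool × Bool, w f i c * h i c := by
  rw [Ex]
  have key : ∀ p : (Fin n → Bool) × (Fin n → Bool),
      (sampleProb f p.1 * sampleProb f p.2) * ∏ i, h i (p.1 i, p.2 i)
        = ∏ i, (w f i (p.1 i, p.2 i) * h i (p.1 i, p.2 i)) := by
    intro p; rw [mu_prod, ← Finset.prod_mul_distrib]
  simp_rw [key]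
  rw [Finset.prod_univ_sum, Fintype.piFinset_univ]
  exact (Fintype.sum_equiv (Equiv.arrowProdEquivProdArrow (Fin n) (fun _ => Bool) (fun _ => Bool)) _ _
    (fun z => by simp [Equiv.arrowProdEquivProdArrow])).symm

lemma percoord (i : Fin n) (e : ℕ) :
    ∑ c : Bool × Bool, w f i c * db c ^ e = M f i e := by
  rw [Fintype.sum_prod_type]
  simp only [Fintype.sum_bool]
  rcases Nat.eq_zero_or_pos e with he | he
  · subst he; simp [w, db, b2r, M]; ring
  · have hz : (0:ℝ) ^ e = 0 := zero_pow he.ne'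
    rcases Nat.even_or_odd e with hpar | hpar
    · simp [w, db, b2r, M, he.ne', hpar, hz, hpar.neg_one_pow]; ring
    · simp [w, db, b2r, M, he.ne', Nat.not_even_iff_odd.mpr hpar, hz, hpar.neg_one_pow]
      ring
  
lemma momProd (c : Fin n → ℕ) :
    Ex f (fun p => ∏ i, dd i p ^ c i) = ∏ i, M f i (c i) := by
  have := factor f (fun i z => db z ^ c i)
  simp only [dd] at *
  rw [this]
  exact Finset.prod_congr rfl fun i _ => percoord f i (c i)

lemma Ex_one : Ex f (fun _ => 1) = 1 := by
  have h := momProd f (fun _ => 0)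
  simp [M] at h
  simpa using h

lemma Ex_sum {α : Type*} (s : Finset α) (g : α → (Fin n → Bool) × (Fin n → Bool) → ℝ) :
    Ex f (fun p => ∑ i ∈ s, g i p) = ∑ i ∈ s, Ex f (fun p => g i p) := by
  simp only [Ex, Finset.mul_sum]
  exact Finset.sum_comm

lemma prod_single (i : Fin n) (a : Fin n → ℝ) :
    ∏ m, (if m = i then a m else 1) = a i := by
  simp

lemma prod_pair {i k : Fin n} (hik : i ≠ k) (a : Fin n → ℝ) :
    ∏ m, (if m = i then a m else if m = k then a m else 1) = a i * a k := by
  have : ∀ m : Fin n, (if m = i then a m else if m = k then a m else 1)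
      = (if m = i then a m else 1) * (if m = k then a m else 1) := by
    intro m
    by_cases h1 : m = i
    · subst h1; simp [hik]
    · by_cases h2 : m = k <;> simp [h1, h2, hik.symm]
  rw [Finset.prod_congr rfl fun m _ => this m, Finset.prod_mul_distrib,
    prod_single, prod_single]

lemma M_val0 (m : Fin n) : M f m 0 = 1 := by norm_num [M]
lemma M_val1 (m : Fin n) : M f m 1 = 0 := by norm_num [M, Nat.even_iff]
lemma M_val2 (m : Fin n) : M f m 2 = 2 * f m * (1 - f m) := by norm_num [M, Nat.even_iff]
lemma M_val3 (m : Fin n) : M f m 3 = 0 := by norm_num [M, Nat.even_iff]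
lemma M_val4 (m : Fin n) : M f m 4 = 2 * f m * (1 - f m) := by norm_num [M, Nat.even_iff]

lemma dd_mul_two (i j : Fin n) (p : (Fin n → Bool) × (Fin n → Bool)) :
    dd i p * dd j p
      = ∏ m, dd m p ^ ((if m = i then 1 else 0) + (if m = j then 1 else 0)) := by
  simp_rw [pow_add]
  rw [Finset.prod_mul_distrib]
  simp_rw [pow_ite, pow_one, pow_zero]
  rw [prod_single, prod_single]

lemma T2 (i j : Fin n) :
    Ex f (fun p => dd i p * dd j p) = if i = j then 2 * f i * (1 - f i) else 0 := by
  have hE : Ex f (fun p => dd i p * dd j p)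
      = ∏ m, M f m ((if m = i then 1 else 0) + (if m = j then 1 else 0)) := by
    rw [← momProd]
    exact congrArg _ (funext fun p => dd_mul_two i j p)
  rw [hE]
  by_cases hij : i = j
  · subst hij
    rw [if_pos rfl]
    have key : ∀ m : Fin n, M f m ((if m = i then 1 else 0) + (if m = i then 1 else 0))
        = if m = i then 2 * f m * (1 - f m) else 1 := by
      intro m
      by_cases h : m = i <;> simp [h, M_val2, M_val0]
    rw [Finset.prod_congr rfl fun m _ => key m, prod_single]
  · rw [if_neg hij]
    apply Finset.prod_eq_zero (Finset.mem_univ i)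
    simp [hij, M_val1]

lemma dd_mul_four (i j k l : Fin n) (p : (Fin n → Bool) × (Fin n → Bool)) :
    dd i p * dd j p * dd k p * dd l p
      = ∏ m, dd m p ^ (((if m = i then 1 else 0) + (if m = j then 1 else 0))
          + ((if m = k then 1 else 0) + (if m = l then 1 else 0))) := by
  simp_rw [pow_add]
  rw [Finset.prod_mul_distrib, Finset.prod_mul_distrib, Finset.prod_mul_distrib]
  simp_rw [pow_ite, pow_one, pow_zero]
  rw [prod_single, prod_single, prod_single, prod_single]
  ring

lemma ite_nn {P : Prop} [Decidable P] {a b : ℝ} (ha : 0 ≤ a) (hb : 0 ≤ b) :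
    0 ≤ if P then a else b := by split <;> assumption

lemma T4bound (hf : ∀ m, 0 ≤ f m ∧ f m ≤ 1) (i j k l : Fin n) :
    Ex f (fun p => dd i p * dd j p * dd k p * dd l p)
      ≤ (if k = l then (if i = j then (2*f i*(1-f i))*(2*f k*(1-f k)) else 0) else 0)
        + (if j = l then (if i = k then (2*f i*(1-f i))*(2*f j*(1-f j)) else 0) else 0)
        + (if i = l then (if j = k then (2*f i*(1-f i))*(2*f j*(1-f j)) else 0) else 0)
        + (if i = l then (if i = k then (if i = j then 2*f i*(1-f i) else 0) else 0) else 0) := by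
  have hs : ∀ m : Fin n, 0 ≤ 2 * f m * (1 - f m) := by
    intro m; nlinarith [(hf m).1, (hf m).2]
  have hR : ∀ i' j' k' l' : Fin n, (0:ℝ) ≤
      (if k' = l' then (if i' = j' then (2*f i'*(1-f i'))*(2*f k'*(1-f k')) else 0) else 0)
        + (if j' = l' then (if i' = k' then (2*f i'*(1-f i'))*(2*f j'*(1-f j')) else 0) else 0)
        + (if i' = l' then (if j' = k' then (2*f i'*(1-f i'))*(2*f j'*(1-f j')) else 0) else 0)
        + (if i' = l' then (if i' = k' then (if i' = j' then 2*f i'*(1-f i') else 0) else 0) else 0) := by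
    intro i' j' k' l'
    have m1 := mul_nonneg (hs i') (hs k')
    have m2 := mul_nonneg (hs i') (hs j')
    refine add_nonneg (add_nonneg (add_nonneg ?_ ?_) ?_) ?_
    · exact ite_nn (ite_nn m1 le_rfl) le_rfl
    · exact ite_nn (ite_nn m2 le_rfl) le_rfl
    · exact ite_nn (ite_nn m2 le_rfl) le_rfl
    · exact ite_nn (ite_nn (ite_nn (hs i') le_rfl) le_rfl) le_rfl
  have hE : Ex f (fun p => dd i p * dd j p * dd k p * dd l p)
      = ∏ m, M f m (((if m = i then 1 else 0) + (if m = j then 1 else 0))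
          + ((if m = k then 1 else 0) + (if m = l then 1 else 0))) := by
    rw [← momProd]
    exact congrArg _ (funext fun p => dd_mul_four i j k l p)
  rw [hE]
  by_cases hij : i = j
  · subst hij
    by_cases hkl : k = l
    · subst hkl
      by_cases hik : i = k
      · subst hik
        have key : ∀ m : Fin n,
            M f m (((if m = i then 1 else 0) + (if m = i then 1 else 0))
              + ((if m = i then 1 else 0) + (if m = i then 1 else 0)))
            = if m = i then 2 * f m * (1 - f m) else 1 := by
          intro m; by_cases h : m = i <;> simp [h, M_val4, M_val0]
        rw [Finset.prod_congr rfl fun m _ => key m, prod_single]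
        simp
        nlinarith [hs i, mul_self_nonneg (2 * f i * (1 - f i))]
      · have hki : ¬ k = i := fun h => hik h.symm
        have key : ∀ m : Fin n,
            M f m (((if m = i then 1 else 0) + (if m = i then 1 else 0))
              + ((if m = k then 1 else 0) + (if m = k then 1 else 0)))
            = if m = i then 2 * f m * (1 - f m) else if m = k then 2 * f m * (1 - f m) else 1 := by
          intro m
          by_cases h1 : m = i
          · subst h1; simp [hik, M_val2]
          · by_cases h2 : m = k <;> simp [h1, h2, hki, M_val2, M_val0]
        rw [Finset.prod_congr rfl fun m _ => key m, prod_pair hik]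
        simp [hik]
    · by_cases hik : i = k
      · subst hik
        have hli : ¬ l = i := fun h => hkl h.symm
        have hz : M f l (((if l = i then 1 else 0) + (if l = i then 1 else 0))
            + ((if l = i then 1 else 0) + (if l = l then 1 else 0))) = 0 := by
          simp [hli, M_val1]
        rw [Finset.prod_eq_zero (Finset.mem_univ l) hz]
        exact hR i i i l
      · have hki : ¬ k = i := fun h => hik h.symm
        have hz : M f k (((if k = i then 1 else 0) + (if k = i then 1 else 0))
            + ((if k = k then 1 else 0) + (if k = l then 1 else 0))) = 0 := by
          simp [hki, hkl, M_val1]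
        rw [Finset.prod_eq_zero (Finset.mem_univ k) hz]
        exact hR i i k l
  · by_cases hkl : k = l
    · subst hkl
      have hz : M f i (((if i = i then 1 else 0) + (if i = j then 1 else 0))
          + ((if i = k then 1 else 0) + (if i = k then 1 else 0))) = 0 := by
        by_cases h : i = k
        · have hkj : ¬ k = j := fun hh => hij (h.trans hh)
          simp [hij, h, hkj, M_val3]
        · simp [hij, h, M_val1]
      rw [Finset.prod_eq_zero (Finset.mem_univ i) hz]
      exact hR i j k k
    · by_cases hik : i = k
      · subst hik
        by_cases hjl : j = l
        · subst hjl
          have hji : ¬ j = i := fun h => hij h.symm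
          have key : ∀ m : Fin n,
              M f m (((if m = i then 1 else 0) + (if m = j then 1 else 0))
                + ((if m = i then 1 else 0) + (if m = j then 1 else 0)))
              = if m = i then 2 * f m * (1 - f m) else if m = j then 2 * f m * (1 - f m) else 1 := by
            intro m
            by_cases h1 : m = i
            · subst h1; simp [hij, M_val2]
            · by_cases h2 : m = j <;> simp [h1, h2, hji, M_val2, M_val0]
          rw [Finset.prod_congr rfl fun m _ => key m, prod_pair hij]
          simp [hij]
        · have hji : ¬ j = i := fun h => hij h.symm
          have hz : M f j (((if j = i then 1 else 0) + (if j = j then 1 else 0))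
              + ((if j = i then 1 else 0) + (if j = l then 1 else 0))) = 0 := by
            simp [hji, hjl, M_val1]
          rw [Finset.prod_eq_zero (Finset.mem_univ j) hz]
          exact hR i j i l
      · by_cases hil : i = l
        · subst hil
          by_cases hjk : j = k
          · subst hjk
            have hji : ¬ j = i := fun h => hij h.symm
            have key : ∀ m : Fin n,
                M f m (((if m = i then 1 else 0) + (if m = j then 1 else 0))
                  + ((if m = j then 1 else 0) + (if m = i then 1 else 0)))
                = if m = i then 2 * f m * (1 - f m) else if m = j then 2 * f m * (1 - f m) else 1 := by
              intro m
              by_cases h1 : m = i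
              · subst h1; simp [hij, M_val2]
              · by_cases h2 : m = j <;> simp [h1, h2, hji, M_val2, M_val0]
            rw [Finset.prod_congr rfl fun m _ => key m, prod_pair hij]
            simp [hij, hji]
          · have hkj : ¬ k = j := fun h => hjk h.symm
            have hz : M f k (((if k = i then 1 else 0) + (if k = j then 1 else 0))
                + ((if k = k then 1 else 0) + (if k = i then 1 else 0))) = 0 := by
              simp [hkl, hkj, M_val1]
            rw [Finset.prod_eq_zero (Finset.mem_univ k) hz]
            exact hR i j k i
        · have hz : M f i (((if i = i then 1 else 0) + (if i = j then 1 else 0))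
              + ((if i = k then 1 else 0) + (if i = l then 1 else 0))) = 0 := by
            simp [hij, hik, hil, M_val1]
          rw [Finset.prod_eq_zero (Finset.mem_univ i) hz]
          exact hR i j k l

lemma numOnes_cast (x : Fin n → Bool) : ((numOnes x : ℕ) : ℝ) = ∑ i, b2r (x i) := by
  rw [numOnes, Finset.card_filter]
  push_cast
  simp [b2r]

lemma Y_eq (p : (Fin n → Bool) × (Fin n → Bool)) :
    (numOnes p.1 : ℝ) - (numOnes p.2 : ℝ) = ∑ i, dd i p := by
  rw [numOnes_cast, numOnes_cast, ← Finset.sum_sub_distrib]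
  rfl

lemma sum_ite_const {α : Type*} [Fintype α] (P : Prop) [Decidable P] (g : α → ℝ) :
    ∑ x : α, (if P then g x else 0) = if P then ∑ x, g x else 0 := by
  split <;> simp

lemma EY2 : Ex f (fun p => (∑ i, dd i p)^2) = ∑ i, 2 * f i * (1 - f i) := by
  have hexp : (fun p : (Fin n → Bool) × (Fin n → Bool) => (∑ i, dd i p)^2)
      = fun p => ∑ i, ∑ j, dd i p * dd j p := by
    funext p; rw [sq, Finset.sum_mul_sum]
  rw [hexp, Ex_sum]
  have key : ∀ i : Fin n, Ex f (fun p => ∑ j, dd i p * dd j p) = 2 * f i * (1 - f i) := by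
    intro i
    rw [Ex_sum, Finset.sum_congr rfl fun j _ => T2 f i j]
    simp
  rw [Finset.sum_congr rfl fun i _ => key i]

lemma EY4 (hf : ∀ m, 0 ≤ f m ∧ f m ≤ 1) :
    Ex f (fun p => (∑ i, dd i p)^4)
      ≤ 3 * (∑ i, 2 * f i * (1 - f i))^2 + (∑ i, 2 * f i * (1 - f i)) := by
  have hexp : (fun p : (Fin n → Bool) × (Fin n → Bool) => (∑ i, dd i p)^4)
      = fun p => ∑ i, ∑ j, ∑ k, ∑ l, dd i p * dd j p * dd k p * dd l p := by
    funext p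
    have hA : (∑ i, dd i p) * (∑ i, dd i p) = ∑ i, ∑ j, dd i p * dd j p := by
      rw [Finset.sum_mul_sum]
    calc (∑ i, dd i p)^4
        = ((∑ i, dd i p) * (∑ i, dd i p)) * ((∑ i, dd i p) * (∑ i, dd i p)) := by ring
      _ = (∑ i, ∑ j, dd i p * dd j p) * (∑ i, ∑ j, dd i p * dd j p) := by rw [hA]
      _ = ∑ i, ∑ k, (∑ j, dd i p * dd j p) * (∑ l, dd k p * dd l p) := by
            rw [Finset.sum_mul_sum]
      _ = ∑ i, ∑ k, ∑ j, ∑ l, (dd i p * dd j p) * (dd k p * dd l p) :=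
            Finset.sum_congr rfl fun i _ => Finset.sum_congr rfl fun k _ => by
              rw [Finset.sum_mul_sum]
      _ = ∑ i, ∑ j, ∑ k, ∑ l, dd i p * dd j p * dd k p * dd l p := by
            refine Finset.sum_congr rfl fun i _ => ?_
            rw [Finset.sum_comm]
            exact Finset.sum_congr rfl fun j _ => Finset.sum_congr rfl fun k _ =>
              Finset.sum_congr rfl fun l _ => by ring
  rw [hexp]
  simp only [Ex_sum]
  refine le_trans (Finset.sum_le_sum fun i _ => Finset.sum_le_sum fun j _ =>
    Finset.sum_le_sum fun k _ => Finset.sum_le_sum fun l _ => T4bound f hf i j k l) ?_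
  simp only [Finset.sum_add_distrib]
  simp only [Finset.sum_ite_eq, Finset.mem_univ, if_true, sum_ite_const,
    ← Finset.mul_sum, ← Finset.sum_mul]
  nlinarith [sq_nonneg (∑ i, 2 * f i * (1 - f i))]

lemma mu_nonneg (hf : ∀ m, 0 ≤ f m ∧ f m ≤ 1) (p : (Fin n → Bool) × (Fin n → Bool)) :
    0 ≤ sampleProb f p.1 * sampleProb f p.2 := by
  have h1 : ∀ x : Fin n → Bool, 0 ≤ sampleProb f x := by
    intro x
    apply Finset.prod_nonneg
    intro i _
    rcases hf i with ⟨h0, h1⟩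
    split <;> linarith
  exact mul_nonneg (h1 _) (h1 _)

lemma Ex_le (hf : ∀ m, 0 ≤ f m ∧ f m ≤ 1) {g h : (Fin n → Bool) × (Fin n → Bool) → ℝ}
    (hgh : ∀ p, g p ≤ h p) : Ex f g ≤ Ex f h :=
  Finset.sum_le_sum fun p _ => mul_le_mul_of_nonneg_left (hgh p) (mu_nonneg f hf p)

lemma Ex_add (g h : (Fin n → Bool) × (Fin n → Bool) → ℝ) :
    Ex f (fun p => g p + h p) = Ex f g + Ex f h := by
  simp [Ex, mul_add, Finset.sum_add_distrib]

lemma Ex_const (c : ℝ) : Ex f (fun _ => c) = c := by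
  have h1 := Ex_one f
  simp only [Ex, mul_one] at h1 ⊢
  rw [← Finset.sum_mul, h1, one_mul]

end

end TSD

set_option maxHeartbeats 1000000 in
theorem two_samples_differ : ∃ C : ℝ, 0 < C ∧
    ∀ (n D : ℕ) (f : Fin n → ℝ), (∀ i, 1 / 3 ≤ f i ∧ f i ≤ 1) →
      (∑ i, f i) ≤ (n : ℝ) - (D : ℝ) →
      C ≤ prPair f {p | (1 / 5) * Real.sqrt D ≤
            |(numOnes p.1 : ℝ) - (numOnes p.2 : ℝ)|} := by
  classical
  refine ⟨1/10, by norm_num, ?_⟩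
  intro n D f hf hsum
  set Ev : Set ((Fin n → Bool) × (Fin n → Bool)) :=
    {p | (1 / 5) * Real.sqrt D ≤ |(numOnes p.1 : ℝ) - (numOnes p.2 : ℝ)|} with hEv
  have hf' : ∀ m, 0 ≤ f m ∧ f m ≤ 1 := fun m => ⟨by linarith [(hf m).1], (hf m).2⟩
  have hμ := TSD.mu_nonneg f hf'
  have hpr : prPair f Ev
      = ∑ p : (Fin n → Bool) × (Fin n → Bool),
          (sampleProb f p.1 * sampleProb f p.2) * (if p ∈ Ev then (1:ℝ) else 0) := by
    rw [prPair]
    refine Finset.sum_congr rfl fun p _ => ?_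
    rw [Set.indicator_apply]
    split <;> simp
  by_cases hD : D = 0
  · subst hD
    have hall : ∀ p : (Fin n → Bool) × (Fin n → Bool), p ∈ Ev := by
      intro p
      simp only [hEv, Set.mem_setOf_eq, Nat.cast_zero, Real.sqrt_zero, mul_zero]
      exact abs_nonneg _
    rw [hpr]
    have h1 : ∑ p : (Fin n → Bool) × (Fin n → Bool),
        (sampleProb f p.1 * sampleProb f p.2) * (if p ∈ Ev then (1:ℝ) else 0)
        = TSD.Ex f (fun _ => 1) := by
      refine Finset.sum_congr rfl fun p _ => ?_
      rw [if_pos (hall p)]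
    rw [h1, TSD.Ex_one f]
    norm_num
  · have hD1 : (1:ℝ) ≤ (D:ℝ) := by exact_mod_cast Nat.one_le_iff_ne_zero.mpr hD
    set S : ℝ := ∑ i, 2 * f i * (1 - f i) with hSdef
    have hSD : (2/3) * (D:ℝ) ≤ S := by
      have hstep : ∀ i, (2/3) * (1 - f i) ≤ 2 * f i * (1 - f i) := by
        intro i; nlinarith [(hf i).1, (hf i).2]
      have hDsum : (D:ℝ) ≤ ∑ i, (1 - f i) := by
        rw [Finset.sum_sub_distrib]
        simp only [Finset.sum_const, Finset.card_univ, Fintype.card_fin, nsmul_eq_mul, mul_one]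
        linarith
      calc (2/3) * (D:ℝ) ≤ (2/3) * ∑ i, (1 - f i) := by linarith
        _ = ∑ i, (2/3) * (1 - f i) := Finset.mul_sum _ _ _
        _ ≤ S := Finset.sum_le_sum fun i _ => hstep i
    have hS23 : 2/3 ≤ S := by nlinarith
    set t : ℝ := (1 / 5) * Real.sqrt D with ht
    have ht0 : 0 ≤ t := by positivity
    have ht2 : t^2 = (D:ℝ)/25 := by
      rw [ht, mul_pow, Real.sq_sqrt (by positivity : (0:ℝ) ≤ (D:ℝ))]; ring
    have ht2S : t^2 ≤ (3/50) * S := by rw [ht2]; nlinarith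
    have hmem : ∀ p : (Fin n → Bool) × (Fin n → Bool),
        p ∈ Ev ↔ t ≤ |∑ i, TSD.dd i p| := by
      intro p
      rw [hEv, Set.mem_setOf_eq, TSD.Y_eq p]
    set ind : (Fin n → Bool) × (Fin n → Bool) → ℝ := fun p => if p ∈ Ev then 1 else 0 with hind
    have hEY2 : TSD.Ex f (fun p => (∑ i, TSD.dd i p)^2) = S := TSD.EY2 f
    have hEY4 : TSD.Ex f (fun p => (∑ i, TSD.dd i p)^4) ≤ 3*S^2 + S := TSD.EY4 f hf'
    -- step 1 : S ≤ t² + E[Y² ind]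
    have hmono : S ≤ t^2 + TSD.Ex f (fun p => (∑ i, TSD.dd i p)^2 * ind p) := by
      have hp : ∀ p, (∑ i, TSD.dd i p)^2 ≤ t^2 + (∑ i, TSD.dd i p)^2 * ind p := by
        intro p
        by_cases hme : p ∈ Ev
        · rw [hind]; simp only [if_pos hme, mul_one]
          nlinarith [sq_nonneg t]
        · rw [hind]; simp only [if_neg hme, mul_zero, add_zero]
          have hlt : |∑ i, TSD.dd i p| < t := by
            by_contra hcon
            exact hme ((hmem p).mpr (le_of_not_gt hcon))
          nlinarith [abs_nonneg (∑ i, TSD.dd i p), sq_abs (∑ i, TSD.dd i p)]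
      calc S = TSD.Ex f (fun p => (∑ i, TSD.dd i p)^2) := hEY2.symm
        _ ≤ TSD.Ex f (fun p => t^2 + (∑ i, TSD.dd i p)^2 * ind p) := TSD.Ex_le f hf' hp
        _ = t^2 + TSD.Ex f (fun p => (∑ i, TSD.dd i p)^2 * ind p) := by
            rw [TSD.Ex_add f, TSD.Ex_const f]
    -- step 2 : Cauchy-Schwarz
    have hP0 : 0 ≤ prPair f Ev := by
      rw [hpr]
      refine Finset.sum_nonneg fun p _ => mul_nonneg (hμ p) ?_
      split <;> norm_num
    have hCS : (TSD.Ex f (fun p => (∑ i, TSD.dd i p)^2 * ind p))^2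
        ≤ (3*S^2 + S) * prPair f Ev := by
      have key := Finset.sum_mul_sq_le_sq_mul_sq Finset.univ
        (fun p : (Fin n → Bool) × (Fin n → Bool) =>
          Real.sqrt (sampleProb f p.1 * sampleProb f p.2) * (∑ i, TSD.dd i p)^2)
        (fun p => Real.sqrt (sampleProb f p.1 * sampleProb f p.2) * ind p)
      have e1 : ∑ p : (Fin n → Bool) × (Fin n → Bool),
          (Real.sqrt (sampleProb f p.1 * sampleProb f p.2) * (∑ i, TSD.dd i p)^2)
            * (Real.sqrt (sampleProb f p.1 * sampleProb f p.2) * ind p)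
          = TSD.Ex f (fun p => (∑ i, TSD.dd i p)^2 * ind p) := by
        rw [TSD.Ex]
        refine Finset.sum_congr rfl fun p _ => ?_
        rw [show (Real.sqrt (sampleProb f p.1 * sampleProb f p.2) * (∑ i, TSD.dd i p)^2)
              * (Real.sqrt (sampleProb f p.1 * sampleProb f p.2) * ind p)
            = (Real.sqrt (sampleProb f p.1 * sampleProb f p.2)
                * Real.sqrt (sampleProb f p.1 * sampleProb f p.2))
              * ((∑ i, TSD.dd i p)^2 * ind p) from by ring,
          Real.mul_self_sqrt (hμ p)]
      have e2 : ∑ p : (Fin n → Bool) × (Fin n → Bool),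
          (Real.sqrt (sampleProb f p.1 * sampleProb f p.2) * (∑ i, TSD.dd i p)^2)^2
          = TSD.Ex f (fun p => (∑ i, TSD.dd i p)^4) := by
        rw [TSD.Ex]
        refine Finset.sum_congr rfl fun p _ => ?_
        rw [mul_pow, Real.sq_sqrt (hμ p)]
        ring
      have e3 : ∑ p : (Fin n → Bool) × (Fin n → Bool),
          (Real.sqrt (sampleProb f p.1 * sampleProb f p.2) * ind p)^2
          = prPair f Ev := by
        rw [hpr]
        refine Finset.sum_congr rfl fun p _ => ?_
        rw [mul_pow, Real.sq_sqrt (hμ p), hind]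
        by_cases hme : p ∈ Ev <;> simp [hme]
      rw [e1, e2, e3] at key
      exact le_trans key (mul_le_mul_of_nonneg_right hEY4 hP0)
    have hS2 : 0 ≤ S - t^2 := by nlinarith
    have hm2 : S - t^2 ≤ TSD.Ex f (fun p => (∑ i, TSD.dd i p)^2 * ind p) := by linarith
    have hfin : (S - t^2)^2 ≤ (3*S^2 + S) * prPair f Ev :=
      le_trans (pow_le_pow_left₀ hS2 hm2 2) hCS
    have h47 : (47/50 * S)^2 ≤ (3*S^2 + S) * prPair f Ev := by
      refine le_trans (pow_le_pow_left₀ (by nlinarith) (by nlinarith) 2) hfin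
    have hpos : (0:ℝ) < 3*S^2 + S := by nlinarith
    have hfrac : 1/10 * (3*S^2 + S) ≤ (47/50*S)^2 := by
      nlinarith [hS23, sq_nonneg (S - 2/3)]
    generalize hPg : prPair f Ev = P at h47 hP0 ⊢
    nlinarith [h47, hfrac, hpos]
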